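/- Let R_1 and R_2 be commutative rings with identity, S_1 and S_2 multiplicative subsets of R_1 and R_2 respectively, m and n positive integers, and for j = 1, 2 let I_j be an ideal of R_j with I_j ∩ S_j = ∅. If I_1 is an S_1-m-absorbing ideal of R_1 and I_2 is an S_2-n-absorbing ideal of R_2, then I_1 × I_2 is an (S_1 × S_2)-(m+n)-absorbing ideal of the product ring R_1 × R_2. -/

import Mathlib

/-- `I` is `S`-`n`-absorbing with associated element `s`. -/
def IsSNAbsorbingAssoc {R : Type*} [CommRing R] (s : R) (n : ℕ) (I : Ideal R) : Prop :=
  ∀ r : Fin (n + 1) → R, (∏ i, r i) ∈ I →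
    ∃ j : Fin (n + 1), s * ∏ i ∈ Finset.univ.erase j, r i ∈ I

/-- `I` is an `S`-`n`-absorbing ideal. -/
def IsSNAbsorbing {R : Type*} [CommRing R] (S : Set R) (n : ℕ) (I : Ideal R) : Prop :=
  ∃ s ∈ S, IsSNAbsorbingAssoc s n I

open Finset

/-- Reformulation of the absorbing condition for an arbitrary index set. -/
lemma aux_base {R ι : Type*} [CommRing R] [DecidableEq ι] {s : R} {n : ℕ} {I : Ideal R}
    (h : IsSNAbsorbingAssoc s n I) (B : Finset ι) (r : ι → R)
    (hB : B.card = n + 1) (hp : ∏ i ∈ B, r i ∈ I) :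
    ∃ j ∈ B, s * ∏ i ∈ B.erase j, r i ∈ I := by
  have e : Fin (n + 1) ≃ {x // x ∈ B} := (B.equivFinOfCardEq hB).symm
  set f : Fin (n + 1) → ι := fun i => ((e i : {x // x ∈ B}) : ι) with hf
  have hinj : Function.Injective f := fun a b hab => e.injective (Subtype.ext hab)
  have himg : Finset.univ.image f = B := by
    ext x
    simp only [mem_image, mem_univ, true_and]
    constructor
    · rintro ⟨i, rfl⟩; exact (e i).2
    · intro hx; exact ⟨e.symm ⟨x, hx⟩, by simp [hf]⟩
  have hp' : ∏ i, r (f i) ∈ I := by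
    have := Finset.prod_image (s := (Finset.univ : Finset (Fin (n+1)))) (g := f) (f := r)
      (fun a _ b _ hab => hinj hab)
    rw [himg] at this
    rw [← this]; exact hp
  obtain ⟨j, hj⟩ := h (fun i => r (f i)) hp'
  refine ⟨f j, (e j).2, ?_⟩
  have : ∏ i ∈ Finset.univ.erase j, r (f i) = ∏ x ∈ B.erase (f j), r x := by
    rw [← Finset.prod_image (s := Finset.univ.erase j) (g := f) (f := r)
      (fun a _ b _ hab => hinj hab), Finset.image_erase hinj, himg]
  rwa [this] at hj

/-- From `t.card` factors with product in `I`, with `t.card ≥ n+1`, one may pick `n` of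
them whose product multiplied by a suitable power of `s` lies in `I`. -/
lemma aux_main {R ι : Type*} [CommRing R] [DecidableEq ι] {s : R} {n : ℕ} {I : Ideal R}
    (h : IsSNAbsorbingAssoc s n I) :
    ∀ (t : Finset ι) (r : ι → R), n + 1 ≤ t.card → ∏ i ∈ t, r i ∈ I →
      ∃ A ⊆ t, A.card = n ∧ s ^ (t.card - n) * ∏ i ∈ A, r i ∈ I := by
  intro t
  induction t using Finset.strongInduction with
  | _ t ih =>
    intro r hcard hp
    rcases eq_or_lt_of_le hcard with hc | hc
    · -- base case: t.card = n + 1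
      obtain ⟨j, hjB, hj⟩ := aux_base h t r hc.symm hp
      refine ⟨t.erase j, erase_subset _ _, ?_, ?_⟩
      · rw [card_erase_of_mem hjB]; omega
      · rw [← hc]; simpa using hj
    · -- inductive step: t.card ≥ n + 2
      have h2 : n + 2 ≤ t.card := hc
      obtain ⟨x, hx⟩ : ∃ x, x ∈ t := Finset.card_pos.mp (by omega) |>.exists_mem
      obtain ⟨y, hy⟩ : ∃ y, y ∈ t.erase x := Finset.card_pos.mp (by
        rw [card_erase_of_mem hx]; omega) |>.exists_mem
      have hyx : y ≠ x := (Finset.mem_erase.mp hy).1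
      have hyt : y ∈ t := (Finset.mem_erase.mp hy).2
      set t' := t.erase y with ht'
      have hxt' : x ∈ t' := Finset.mem_erase.mpr ⟨fun hh => hyx hh.symm, hx⟩
      have hct' : t'.card = t.card - 1 := card_erase_of_mem hyt
      set r' : ι → R := Function.update r x (r x * r y) with hr'
      have hupd : ∀ i ≠ x, r' i = r i := fun i hi => Function.update_of_ne hi _ _
      have hr'x : r' x = r x * r y := by rw [hr']; exact Function.update_self _ _ _
      have hprod : ∏ i ∈ t', r' i = ∏ i ∈ t, r i := by
        rw [← Finset.mul_prod_erase t' r' hxt', ← Finset.mul_prod_erase t r hyt,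
          ← Finset.mul_prod_erase (t.erase y) r hxt']
        have : ∏ i ∈ t'.erase x, r' i = ∏ i ∈ t'.erase x, r i :=
          Finset.prod_congr rfl fun i hi => hupd i (Finset.mem_erase.mp hi).1
        rw [this, hr'x]
        ring
      obtain ⟨A, hAt', hAcard, hA⟩ := ih t' (Finset.erase_ssubset hyt) r'
        (by omega) (by rw [hprod]; exact hp)
      set c := t'.card - n with hcdef
      have hexp : t.card - n = c + 1 := by omega
      have hAt : A ⊆ t := hAt'.trans (erase_subset _ _)
      by_cases hxA : x ∈ A
      · -- x ∈ A : need to re-split the merged factor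
        have hyA : y ∉ A := fun hh => (Finset.mem_erase.mp (hAt' hh)).1 rfl
        set B := insert y A with hB
        have hBcard : B.card = n + 1 := by rw [Finset.card_insert_of_notMem hyA, hAcard]
        have hBt : B ⊆ t := Finset.insert_subset hyt hAt
        have hBprod : s ^ c * ∏ i ∈ B, r i = s ^ c * ∏ i ∈ A, r' i := by
          rw [Finset.prod_insert hyA, ← Finset.mul_prod_erase A r' hxA,
            ← Finset.mul_prod_erase A r hxA]
          have : ∏ i ∈ A.erase x, r' i = ∏ i ∈ A.erase x, r i :=
            Finset.prod_congr rfl fun i hi => hupd i (Finset.mem_erase.mp hi).1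
          rw [this, hr'x]
          ring
        set r'' : ι → R := Function.update r y (s ^ c * r y) with hr''
        have hupd'' : ∀ i ≠ y, r'' i = r i := fun i hi => Function.update_of_ne hi _ _
        have hr''y : r'' y = s ^ c * r y := by rw [hr'']; exact Function.update_self _ _ _
        have hB'' : ∏ i ∈ B, r'' i ∈ I := by
          have : ∏ i ∈ B, r'' i = s ^ c * ∏ i ∈ B, r i := by
            rw [Finset.prod_insert hyA, Finset.prod_insert hyA, hr''y]
            have : ∏ i ∈ A, r'' i = ∏ i ∈ A, r i :=
              Finset.prod_congr rfl fun i hi => hupd'' i (fun hh => hyA (hh ▸ hi))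
            rw [this]; ring
          rw [this, hBprod]; exact hA
        obtain ⟨j, hjB, hj⟩ := aux_base h B r'' hBcard hB''
        by_cases hjy : j = y
        · -- omitted factor is y : the remaining set is A
          subst hjy
          have hBe : B.erase j = A := by
            rw [hB, Finset.erase_insert hyA]
          rw [hBe] at hj
          have : ∏ i ∈ A, r'' i = ∏ i ∈ A, r i :=
            Finset.prod_congr rfl fun i hi => hupd'' i (fun hh => hyA (hh ▸ hi))
          rw [this] at hj
          refine ⟨A, hAt, hAcard, ?_⟩
          rw [hexp, pow_succ, mul_assoc]
          exact Ideal.mul_mem_left _ _ hj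
        · -- omitted factor is not y
          have hyBe : y ∈ B.erase j := Finset.mem_erase.mpr ⟨fun hh => hjy hh.symm,
            Finset.mem_insert_self _ _⟩
          have hBet : B.erase j ⊆ t := (erase_subset _ _).trans hBt
          have hBecard : (B.erase j).card = n := by
            rw [card_erase_of_mem hjB, hBcard]; omega
          refine ⟨B.erase j, hBet, hBecard, ?_⟩
          have : s * ∏ i ∈ B.erase j, r'' i = s ^ (c+1) * ∏ i ∈ B.erase j, r i := by
            rw [← Finset.mul_prod_erase _ r'' hyBe, ← Finset.mul_prod_erase _ r hyBe,
              hr''y]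
            have : ∏ i ∈ (B.erase j).erase y, r'' i = ∏ i ∈ (B.erase j).erase y, r i :=
              Finset.prod_congr rfl fun i hi => hupd'' i (Finset.mem_erase.mp hi).1
            rw [this]; ring
          rw [this] at hj
          rwa [hexp]
      · -- x ∉ A : the products agree
        have : ∏ i ∈ A, r' i = ∏ i ∈ A, r i :=
          Finset.prod_congr rfl fun i hi => hupd i (fun hh => hxA (hh ▸ hi))
        rw [this] at hA
        refine ⟨A, hAt, hAcard, ?_⟩
        rw [hexp, pow_succ, mul_comm (s ^ c) s, mul_assoc]
        exact Ideal.mul_mem_left _ _ hA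

theorem stmt_15 {R₁ R₂ : Type*} [CommRing R₁] [CommRing R₂]
    (S₁ : Submonoid R₁) (S₂ : Submonoid R₂) (m n : ℕ) (hm : 0 < m) (hn : 0 < n)
    (I₁ : Ideal R₁) (I₂ : Ideal R₂)
    (hd₁ : Disjoint (I₁ : Set R₁) (S₁ : Set R₁))
    (hd₂ : Disjoint (I₂ : Set R₂) (S₂ : Set R₂))
    (hA₁ : IsSNAbsorbing (S₁ : Set R₁) m I₁)
    (hA₂ : IsSNAbsorbing (S₂ : Set R₂) n I₂) :
    IsSNAbsorbing ((S₁.prod S₂ : Submonoid (R₁ × R₂)) : Set (R₁ × R₂)) (m + n)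
      (I₁.prod I₂) := by
  obtain ⟨s₁, hs₁S, hs₁⟩ := hA₁
  obtain ⟨s₂, hs₂S, hs₂⟩ := hA₂
  refine ⟨(s₁ ^ (n + 1), s₂ ^ (m + 1)), ⟨pow_mem hs₁S _, pow_mem hs₂S _⟩, ?_⟩
  intro r hp
  have hp1 : ∏ i, (r i).1 ∈ I₁ := by
    have := (Ideal.mem_prod I₁ I₂ (x := ∏ i, r i)).mp hp
    rw [← Prod.fst_prod]; exact this.1
  have hp2 : ∏ i, (r i).2 ∈ I₂ := by
    have := (Ideal.mem_prod I₁ I₂ (x := ∏ i, r i)).mp hp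
    rw [← Prod.snd_prod]; exact this.2
  have hcard : (Finset.univ : Finset (Fin (m + n + 1))).card = m + n + 1 := by simp
  obtain ⟨A, _, hAcard, hA⟩ := aux_main hs₁ Finset.univ (fun i => (r i).1)
    (by omega) hp1
  obtain ⟨B, _, hBcard, hB⟩ := aux_main hs₂ Finset.univ (fun i => (r i).2)
    (by omega) hp2
  rw [hcard] at hA hB
  have hexp1 : m + n + 1 - m = n + 1 := by omega
  have hexp2 : m + n + 1 - n = m + 1 := by omega
  rw [hexp1] at hA
  rw [hexp2] at hB
  -- find an index outside A ∪ B
  have hABcard : (A ∪ B).card < m + n + 1 := by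
    calc (A ∪ B).card ≤ A.card + B.card := Finset.card_union_le _ _
    _ = m + n := by rw [hAcard, hBcard]
    _ < m + n + 1 := by omega
  obtain ⟨j, hjAB⟩ : ∃ j : Fin (m + n + 1), j ∉ A ∪ B := by
    by_contra hcon
    push_neg at hcon
    have : (Finset.univ : Finset (Fin (m + n + 1))) ⊆ A ∪ B := fun j _ => hcon j
    have := Finset.card_le_card this
    rw [hcard] at this
    omega
  have hjA : A ⊆ Finset.univ.erase j := fun i hi =>
    Finset.mem_erase.mpr ⟨fun hh => hjAB (Finset.mem_union_left _ (hh ▸ hi)), Finset.mem_univ _⟩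
  have hjB : B ⊆ Finset.univ.erase j := fun i hi =>
    Finset.mem_erase.mpr ⟨fun hh => hjAB (Finset.mem_union_right _ (hh ▸ hi)), Finset.mem_univ _⟩
  refine ⟨j, ?_⟩
  have h1 : s₁ ^ (n + 1) * ∏ i ∈ Finset.univ.erase j, (r i).1 ∈ I₁ := by
    rw [← Finset.prod_sdiff hjA, ← mul_assoc, mul_comm (s₁ ^ (n+1)), mul_assoc]
    exact Ideal.mul_mem_left _ _ hA
  have h2 : s₂ ^ (m + 1) * ∏ i ∈ Finset.univ.erase j, (r i).2 ∈ I₂ := by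
    rw [← Finset.prod_sdiff hjB, ← mul_assoc, mul_comm (s₂ ^ (m+1)), mul_assoc]
    exact Ideal.mul_mem_left _ _ hB
  have key : ((s₁ ^ (n + 1), s₂ ^ (m + 1)) : R₁ × R₂) * ∏ i ∈ Finset.univ.erase j, r i
      = (s₁ ^ (n + 1) * ∏ i ∈ Finset.univ.erase j, (r i).1,
         s₂ ^ (m + 1) * ∏ i ∈ Finset.univ.erase j, (r i).2) := by
    rw [Prod.ext_iff]
    constructor
    · rw [Prod.fst_mul, Prod.fst_prod]
    · rw [Prod.snd_mul, Prod.snd_prod]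
  rw [key]
  exact (Ideal.mem_prod I₁ I₂).mpr ⟨h1, h2⟩
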